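/- There is no bijective holomorphic map from the tube domain T = {(z₁,z₂) ∈ ℂ² : Re z₂ < 0} onto the open unit ball B = {(ζ₁,ζ₂) ∈ ℂ² : |ζ₁|² + |ζ₂|² < 1}. (In particular the Siegel-Jacobi space 𝕄_Normal and the Siegel half-space 𝕎_Normal are not biholomorphic.) -/

import Mathlib

open Complex

/-- There is no bijective holomorphic map from the tube domain
`T = {(z₁,z₂) : Re z₂ < 0}` onto the unit ball in `ℂ²`; in particular the
Siegel-Jacobi space and the Siegel half-space are not biholomorphic. -/
theorem no_biholomorphism_tube_to_ball :
    ¬ ∃ f : ℂ × ℂ → ℂ × ℂ,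
      DifferentiableOn ℂ f {z : ℂ × ℂ | z.2.re < 0} ∧
      Set.BijOn f {z : ℂ × ℂ | z.2.re < 0}
        {ζ : ℂ × ℂ | ‖ζ.1‖ ^ 2 + ‖ζ.2‖ ^ 2 < 1} := by
  rintro ⟨f, hdiff, hbij⟩
  set T : Set (ℂ × ℂ) := {z : ℂ × ℂ | z.2.re < 0} with hT
  have hTopen : IsOpen T := by
    have : T = (fun z : ℂ × ℂ => z.2.re) ⁻¹' Set.Iio 0 := rfl
    rw [this]
    exact isOpen_Iio.preimage (Complex.continuous_re.comp continuous_snd)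
  have hmem : ∀ z : ℂ, (z, (-1 : ℂ)) ∈ T := by
    intro z
    simp [hT]
  -- the restriction of f to the line z ↦ (z, -1)
  set g : ℂ → ℂ × ℂ := fun z => f (z, -1) with hg
  have hgdiff : Differentiable ℂ g := by
    intro z
    have h1 : DifferentiableAt ℂ f (z, (-1 : ℂ)) :=
      (hdiff (z, -1) (hmem z)).differentiableAt (hTopen.mem_nhds (hmem z))
    exact h1.comp z ((differentiable_id.prodMk (differentiable_const _)) z)
  have hgbd : ∀ z : ℂ, ‖g z‖ ≤ 1 := by
    intro z
    have hmemball := hbij.mapsTo (hmem z)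
    simp only [Set.mem_setOf_eq] at hmemball
    have h1 : ‖(g z).1‖ ≤ 1 := by
      nlinarith [norm_nonneg (g z).1, norm_nonneg (g z).2,
        sq_nonneg ‖(g z).2‖]
    have h2 : ‖(g z).2‖ ≤ 1 := by
      nlinarith [norm_nonneg (g z).1, norm_nonneg (g z).2,
        sq_nonneg ‖(g z).1‖]
    calc ‖g z‖ = max ‖(g z).1‖ ‖(g z).2‖ := rfl
      _ ≤ 1 := max_le h1 h2
  have hbdd : Bornology.IsBounded (Set.range g) := by
    apply Metric.isBounded_range_iff.mpr
    exact ⟨2, fun x y => by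
      have := hgbd x; have := hgbd y
      calc dist (g x) (g y) ≤ ‖g x‖ + ‖g y‖ := dist_le_norm_add_norm _ _
        _ ≤ 2 := by linarith⟩
  have hconst : g 0 = g 1 := hgdiff.apply_eq_apply_of_bounded hbdd 0 1
  have := hbij.injOn (hmem 0) (hmem 1) hconst
  have : (0 : ℂ) = 1 := congrArg Prod.fst this
  exact zero_ne_one this
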